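/- Assume each f_i is convex and differentiable with L_i-Lipschitz gradient, and let x* be a global minimizer of f(x) = (1/N)·Σ_i f_i(x) with f* = f(x*). Then for every x^(k) ∈ ℝ^{N×n}, writing X* = 1·(x*)ᵀ ∈ ℝ^{N×n}: f̄(x̄^(k)) − f* ≤ (1/N)·(‖ḡ^(k)‖ + L·‖x̃^(k)‖)·‖x̄^(k) − X*‖. -/

import Mathlib

open scoped BigOperators
open Filter

noncomputable section

/-- Row-space: each agent holds a vector in ℝⁿ (Euclidean). -/
abbrev Vec (n : ℕ) := EuclideanSpace ℝ (Fin n)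

/-- A "matrix" in ℝ^{N×n}, represented row-wise. -/
abbrev Mat (N n : ℕ) := Fin N → Vec n

/-- Row-mean operator `B ↦ J·B` with `J = (1/N)·11ᵀ`. -/
def meanM {N n : ℕ} (B : Mat N n) : Mat N n := fun _ => (N : ℝ)⁻¹ • ∑ i, B i

/-- Consensus violation `B̃ = B − B̄`. -/
def tilde {N n : ℕ} (B : Mat N n) : Mat N n := B - meanM B

/-- Frobenius norm of a row-wise matrix. -/
def fnorm {N n : ℕ} (B : Mat N n) : ℝ := Real.sqrt (∑ i, ‖B i‖ ^ 2)

/-- Spectral norm (ℓ₂ operator norm) of a square matrix. -/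
def specNorm {N : ℕ} (A : Matrix (Fin N) (Fin N) ℝ) : ℝ :=
  ‖LinearMap.toContinuousLinearMap (Matrix.toEuclideanLin A)‖

/-- Action of an N×N matrix on a row-wise N×n matrix. -/
def Wact {N n : ℕ} (W : Matrix (Fin N) (Fin N) ℝ) (B : Mat N n) : Mat N n :=
  fun i => ∑ j, W i j • B j

/-- Action of a diagonal matrix `diag a` on a row-wise matrix. -/
def dAct {N n : ℕ} (a : Fin N → ℝ) (B : Mat N n) : Mat N n := fun i => a i • B i

/-- The matrix of row-wise gradients: i-th row is `∇f_i(x_i)ᵀ`. -/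
def gRow {N n : ℕ} (f : Fin N → Vec n → ℝ) (x : Mat N n) : Mat N n :=
  fun i => gradient (f i) (x i)

/-- The all-(1/N) matrix `J = (1/N)·11ᵀ`. -/
def Jmat (N : ℕ) : Matrix (Fin N) (Fin N) ℝ := Matrix.of fun _ _ => (N : ℝ)⁻¹

/-- Double stochasticity of `W`. -/
def DoublyStochastic {N : ℕ} (W : Matrix (Fin N) (Fin N) ℝ) : Prop :=
  (∀ i, ∑ j, W i j = 1) ∧ (∀ j, ∑ i, W i j = 1)

/-- The aggregate objective `f̄(x) = (1/N)Σᵢ fᵢ(xᵢ)` over the rows of `x`. -/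
def fbar {N n : ℕ} (f : Fin N → Vec n → ℝ) (x : Mat N n) : ℝ :=
  (N : ℝ)⁻¹ * ∑ i, f i (x i)

lemma grad_convex_ineq {n : ℕ} (f : Vec n → ℝ) (hf : Differentiable ℝ f)
    (hc : ConvexOn ℝ Set.univ f) (a b : Vec n) :
    f a - f b ≤ inner ℝ (gradient f a) (a - b) := by
  set φ : ℝ → ℝ := fun t => f (b + t • (a - b)) with hφ
  have hφc : ConvexOn ℝ Set.univ φ := by
    have := hc.comp_affineMap (AffineMap.lineMap b a : ℝ →ᵃ[ℝ] Vec n)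
    have heq : φ = f ∘ (AffineMap.lineMap b a : ℝ →ᵃ[ℝ] Vec n) := by
      funext t
      simp [φ, AffineMap.lineMap_apply, add_comm]
    rw [heq]
    simpa using this
  have hg : ∀ t : ℝ, HasDerivAt φ
      ((inner ℝ (gradient f (b + t • (a - b))) (a - b) : ℝ)) t := by
    intro t
    have h1 : HasDerivAt (fun t : ℝ => b + t • (a - b)) (a - b) t := by
      simpa using ((hasDerivAt_id t).smul_const (a - b)).const_add b
    have h2 : HasFDerivAt f
        ((InnerProductSpace.toDual ℝ (Vec n)) (gradient f (b + t • (a - b))))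
        (b + t • (a - b)) :=
      hasGradientAt_iff_hasFDerivAt.mp (hf _).hasGradientAt
    have := h2.comp_hasDerivAt t h1
    simpa [InnerProductSpace.toDual_apply_apply, φ, Function.comp_def] using this
  have hs := hφc.slope_le_of_hasDerivAt (Set.mem_univ (0:ℝ)) (Set.mem_univ (1:ℝ))
    zero_lt_one (hg 1)
  have h0 : φ 0 = f b := by simp [φ]
  have h1 : φ 1 = f a := by simp [φ]
  have h2 : b + (1:ℝ) • (a - b) = a := by simp
  rw [slope_def_field] at hs
  rw [h2] at hs
  simpa [h0, h1] using hs

lemma fnorm_const {N n : ℕ} (v : Vec n) :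
    fnorm (fun _ : Fin N => v) = Real.sqrt N * ‖v‖ := by
  simp only [fnorm, Finset.sum_const, Finset.card_univ, Fintype.card_fin, nsmul_eq_mul]
  rw [Real.sqrt_mul (by positivity), Real.sqrt_sq (norm_nonneg v)]

/-- Convexity bound towards the optimum: for convex `L`-smooth `fᵢ` with aggregate
minimizer `x*`, and any `x ∈ ℝ^{N×n}` (writing `X* = 1·(x*)ᵀ`):
`f̄(x̄) − f* ≤ (1/N)(‖ḡ‖ + L‖x̃‖)‖x̄ − X*‖`. -/
theorem stmt18 (N n : ℕ) (hN : 1 ≤ N) (hn : 1 ≤ n)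
    (f : Fin N → Vec n → ℝ) (hf : ∀ i, Differentiable ℝ (f i))
    (hconv : ∀ i, ConvexOn ℝ Set.univ (f i))
    (L : ℝ) (hL : 0 ≤ L)
    (hLip : ∀ i, ∀ y w : Vec n, ‖gradient (f i) y - gradient (f i) w‖ ≤ L * ‖y - w‖)
    (xstar : Vec n) (fstar : ℝ)
    (hfstar : fstar = (N : ℝ)⁻¹ * ∑ i, f i xstar)
    (hmin : ∀ y : Vec n, fstar ≤ (N : ℝ)⁻¹ * ∑ i, f i y)
    (x : Mat N n) :
    fbar f (meanM x) - fstar ≤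
      (N : ℝ)⁻¹ * (fnorm (meanM (gRow f x)) + L * fnorm (tilde x))
        * fnorm (meanM x - fun _ => xstar) := by
  have hNpos : (0:ℝ) < N := by exact_mod_cast Nat.lt_of_lt_of_le Nat.zero_lt_one hN
  set m : Vec n := (N : ℝ)⁻¹ • ∑ i, x i with hm
  set G : Vec n := ∑ i, gradient (f i) (x i) with hG
  set A := fnorm (meanM (gRow f x)) with hA
  set T := fnorm (tilde x) with hT
  set D := fnorm (meanM x - fun _ => xstar) with hD
  have hTnn : 0 ≤ T := Real.sqrt_nonneg _
  have hsN : Real.sqrt N * Real.sqrt N = N := Real.mul_self_sqrt (le_of_lt hNpos)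
  -- ‖G‖ = √N * A
  have hGA : ‖G‖ = Real.sqrt N * A := by
    have h1 : meanM (gRow f x) = fun _ : Fin N => (N : ℝ)⁻¹ • G := rfl
    have : A = Real.sqrt N * ((N : ℝ)⁻¹ * ‖G‖) := by
      rw [hA, h1, fnorm_const, norm_smul]
      simp [abs_of_nonneg (inv_nonneg.mpr (le_of_lt hNpos))]
    rw [this]
    field_simp
    rw [Real.sq_sqrt hNpos.le]
  -- D = √N * ‖m - xstar‖
  have hDval : D = Real.sqrt N * ‖m - xstar‖ := by
    have h1 : (meanM x - fun _ : Fin N => xstar) = fun _ : Fin N => m - xstar := rfl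
    rw [hD, h1, fnorm_const]
  -- ∑ ‖x i - m‖ ≤ √N * T
  have hsum_tilde : ∑ i, ‖x i - m‖ ≤ Real.sqrt N * T := by
    have hcs : (∑ i, ‖x i - m‖) ^ 2 ≤ (N : ℝ) * ∑ i, ‖x i - m‖ ^ 2 := by
      have := sq_sum_le_card_mul_sum_sq (s := (Finset.univ : Finset (Fin N)))
        (f := fun i => ‖x i - m‖)
      simpa using this
    have h0 : 0 ≤ ∑ i, ‖x i - m‖ := Finset.sum_nonneg fun i _ => norm_nonneg _
    have := Real.sqrt_le_sqrt hcs
    rw [Real.sqrt_sq h0, Real.sqrt_mul (le_of_lt hNpos)] at this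
    calc ∑ i, ‖x i - m‖ ≤ Real.sqrt N * Real.sqrt (∑ i, ‖x i - m‖ ^ 2) := this
      _ = Real.sqrt N * T := by
          congr 1
  -- convexity step
  have hconvstep : ∑ i, (f i m - f i xstar) ≤ inner ℝ (∑ i, gradient (f i) m) (m - xstar) := by
    rw [sum_inner]
    exact Finset.sum_le_sum fun i _ => grad_convex_ineq (f i) (hf i) (hconv i) m xstar
  -- norm bound on ∑ ∇f_i(m)
  have hnormbound : ‖∑ i, gradient (f i) m‖ ≤ ‖G‖ + L * ∑ i, ‖x i - m‖ := by
    have hdecomp : ∑ i, gradient (f i) m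
        = G + ∑ i, (gradient (f i) m - gradient (f i) (x i)) := by
      rw [hG, Finset.sum_sub_distrib]
      abel
    rw [hdecomp]
    refine (norm_add_le _ _).trans (add_le_add_right ?_ _)
    refine (norm_sum_le _ _).trans ?_
    rw [Finset.mul_sum]
    refine Finset.sum_le_sum fun i _ => ?_
    calc ‖gradient (f i) m - gradient (f i) (x i)‖ ≤ L * ‖m - x i‖ := hLip i m (x i)
      _ = L * ‖x i - m‖ := by rw [norm_sub_rev]
  -- assemble
  have hlhs : fbar f (meanM x) - fstar = (N : ℝ)⁻¹ * ∑ i, (f i m - f i xstar) := by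
    rw [fbar, hfstar, Finset.sum_sub_distrib, mul_sub]
    rfl
  rw [hlhs, hDval]
  have hinner : (inner ℝ (∑ i, gradient (f i) m) (m - xstar) : ℝ)
      ≤ (Real.sqrt N * A + L * (Real.sqrt N * T)) * ‖m - xstar‖ := by
    calc (inner ℝ (∑ i, gradient (f i) m) (m - xstar) : ℝ)
        ≤ ‖∑ i, gradient (f i) m‖ * ‖m - xstar‖ := real_inner_le_norm _ _
      _ ≤ (Real.sqrt N * A + L * (Real.sqrt N * T)) * ‖m - xstar‖ := by
          apply mul_le_mul_of_nonneg_right _ (norm_nonneg _)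
          refine hnormbound.trans ?_
          rw [hGA]
          exact add_le_add_right (mul_le_mul_of_nonneg_left hsum_tilde hL) _
  calc (N : ℝ)⁻¹ * ∑ i, (f i m - f i xstar)
      ≤ (N : ℝ)⁻¹ * ((Real.sqrt N * A + L * (Real.sqrt N * T)) * ‖m - xstar‖) := by
        apply mul_le_mul_of_nonneg_left (hconvstep.trans hinner)
          (inv_nonneg.mpr (le_of_lt hNpos))
    _ = (N : ℝ)⁻¹ * (A + L * T) * (Real.sqrt N * ‖m - xstar‖) := by ring
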